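/- The explicit map ρ : C⁶(X₂) → (½ℤ)/ℤ defined in the context is a 5-cocycle on X₂: it satisfies ρ(Q∘σ) = ρ(Q) for every Q ∈ C⁶(X₂) and every permutation σ of the six coordinates of 𝔽₂⁶, and ρ(⟨x,z⟩) = ρ(⟨x,y⟩) + ρ(⟨y,z⟩) whenever x, y, z ∈ C⁵(X₂) are such that ⟨x,y⟩ and ⟨y,z⟩ lie in C⁶(X₂). -/

import Mathlib

open scoped BigOperators Classical

abbrev Gn (n : ℕ) : Type := Fin n → ZMod 2
abbrev F2sq : Type := ZMod 2 × ZMod 2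
abbrev 𝕋 : Type := AddCircle (1 : ℝ)

/-- Discrete derivative `∂_h F = T^h F - F`. -/
def del {G H : Type*} [AddCommGroup G] [AddCommGroup H] (h : G) (F : G → H) : G → H :=
  fun x => F (x + h) - F x

/-- Iterated discrete derivative `∂_{h 0} ⋯ ∂_{h (m-1)} F`. -/
def delIter {G H : Type*} [AddCommGroup G] [AddCommGroup H] {m : ℕ}
    (h : Fin m → G) (F : G → H) : G → H :=
  (List.ofFn h).foldr del F

/-- `F` is a (non-classical) polynomial of degree at most `k`. -/
def IsPolyN {G H : Type*} [AddCommGroup G] [AddCommGroup H] (k : ℕ) (F : G → H) : Prop :=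
  ∀ h : Fin (k + 1) → G, delIter h F = 0

/-- The standard basis vector `e_i` of `𝔽₂ⁿ`. -/
def bas {n : ℕ} (i : Fin n) : Gn n := fun t => if t = i then 1 else 0

/-- `Q : 𝔽₂ⁿ → 𝔽₂²` is an `n`-cube of `X₂ = 𝒟²(𝔽₂²)`, i.e. a pair of classical
quadratic polynomials. -/
def IsCubeX2 {n : ℕ} (Q : Gn n → F2sq) : Prop :=
  ∀ a b c : Gn n, del a (del b (del c Q)) = 0

/-- The coefficient `h_{ij} = ∂_{e_i}∂_{e_j} Q (0)` of a `6`-cube of `X₂`. -/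
def hcoef (Q : Gn 6 → F2sq) (i j : Fin 6) : F2sq :=
  del (bas i) (del (bas j) Q) 0

/-- The explicit cocycle `ρ : C⁶(X₂) → (½ℤ)/ℤ ⊆ 𝕋`:
`ρ(Q) = (1/2) Σ h⁽¹⁾_{ab} h⁽¹⁾_{cd} h⁽²⁾_{ef} mod 1`, where the sum ranges over the
45 partitions of `{1,…,6}` into three two-element sets `{a,b}, {c,d}, {e,f}`, with the
unordered pair `{{a,b},{c,d}}` together with `{e,f}` counted once (enforced by the
canonical ordering `a < b`, `c < d`, `e < f`, `a < c`). -/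
noncomputable def rho (Q : Gn 6 → F2sq) : 𝕋 :=
  ((((∑ a : Fin 6, ∑ b : Fin 6, ∑ c : Fin 6, ∑ d : Fin 6, ∑ e : Fin 6, ∑ f : Fin 6,
      if a < b ∧ c < d ∧ e < f ∧ a < c ∧ ({a, b, c, d, e, f} : Finset (Fin 6)) = Finset.univ
      then (((hcoef Q a b).1 * (hcoef Q c d).1 * (hcoef Q e f).2).val : ℤ)
      else 0 : ℤ) : ℝ) / 2 : ℝ) : 𝕋)

/-- The concatenation `⟨u,v⟩ : 𝔽₂⁵ × 𝔽₂ → 𝔽₂²` of two `5`-cubes along the last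
coordinate. -/
def concat6 (u v : Gn 5 → F2sq) : Gn 6 → F2sq :=
  fun ω => if ω (Fin.last 5) = 0 then u (fun i => ω i.castSucc) else v (fun i => ω i.castSucc)

/-! ### Auxiliary definitions and lemmas -/

section Aux

def hc5 (u : Gn 5 → F2sq) (i j : Fin 5) : F2sq := del (bas i) (del (bas j) u) 0
def dd (u : Gn 5 → F2sq) (i : Fin 5) : F2sq := u (bas i) - u 0

lemma hcoef_comm (Q : Gn 6 → F2sq) (i j : Fin 6) : hcoef Q i j = hcoef Q j i := by
  simp only [hcoef, del, zero_add]
  rw [add_comm]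
  abel

lemma concat_eval0 (u v : Gn 5 → F2sq) (ω : Gn 6) (h0 : ω (Fin.last 5) = 0) :
    concat6 u v ω = u (fun t => ω t.castSucc) := by simp [concat6, h0]; intro h; exact absurd h0 h

lemma concat_eval1 (u v : Gn 5 → F2sq) (ω : Gn 6) (h1 : ω (Fin.last 5) = 1) :
    concat6 u v ω = v (fun t => ω t.castSucc) := by
  have : (1 : ZMod 2) ≠ 0 := by decide
  simp [concat6, h1, this]; intro h; exact absurd (h1.symm.trans h) this

lemma res_add (a b : Gn 6) :
    (fun t : Fin 5 => a t.castSucc + b t.castSucc) = (fun t => a t.castSucc) + (fun t => b t.castSucc) := rfl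

lemma res_bas (i : Fin 5) : (fun t : Fin 5 => (bas (n := 6) i.castSucc) t.castSucc) = bas i := by
  funext t; simp [bas, Fin.castSucc_inj]

lemma res_bas_last : (fun t : Fin 5 => (bas (n := 6) (Fin.last 5)) t.castSucc) = 0 := by
  funext t; simp [bas, (Fin.castSucc_lt_last t).ne]; exact (Fin.castSucc_lt_last t).ne

lemma res_zero : (fun t : Fin 5 => (0 : Gn 6) t.castSucc) = 0 := rfl

lemma res_zero' : (fun _ : Fin 5 => (0 : ZMod 2)) = (0 : Gn 5) := rfl

lemma bas_last_apply_castSucc (t : Fin 5) : bas (n := 6) (Fin.last 5) t.castSucc = 0 := by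
  simp [bas, (Fin.castSucc_lt_last t).ne]; exact (Fin.castSucc_lt_last t).ne

lemma bas_last_castSucc (i : Fin 5) : (bas (n := 6) i.castSucc) (Fin.last 5) = 0 := by
  simp [bas, (Fin.castSucc_lt_last i).ne']; exact (Fin.castSucc_lt_last i).ne'

lemma bas_last_last : (bas (n := 6) (Fin.last 5)) (Fin.last 5) = 1 := by simp [bas]

lemma hcoef_concat_left (u v : Gn 5 → F2sq) (i j : Fin 5) :
    hcoef (concat6 u v) i.castSucc j.castSucc = hc5 u i j := by
  simp only [hcoef, hc5, del, zero_add, concat_eval0, concat_eval1, Pi.add_apply, Pi.zero_apply,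
    bas_last_castSucc, bas_last_last, add_zero, zero_add, res_add, res_bas, res_bas_last,
    res_zero, res_zero', bas_last_apply_castSucc]

lemma hcoef_concat_last (u v : Gn 5 → F2sq) (i : Fin 5) :
    hcoef (concat6 u v) i.castSucc (Fin.last 5) = dd v i - dd u i := by
  simp only [hcoef, del, zero_add, dd, concat_eval0, concat_eval1, Pi.add_apply, Pi.zero_apply,
    bas_last_castSucc, bas_last_last, add_zero, zero_add, res_add, res_bas, res_bas_last,
    res_zero, res_zero', bas_last_apply_castSucc]
  abel

lemma cube_rel {u v : Gn 5 → F2sq} (h : IsCubeX2 (concat6 u v)) (i j : Fin 5) :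
    hc5 v i j = hc5 u i j := by
  have h0 := congrFun (h (bas i.castSucc) (bas j.castSucc) (bas (Fin.last 5))) 0
  simp only [del, zero_add, Pi.zero_apply, concat_eval0, concat_eval1, Pi.add_apply,
    bas_last_castSucc, bas_last_last, add_zero, zero_add, res_add, res_bas, res_bas_last,
    res_zero, res_zero', bas_last_apply_castSucc] at h0
  try simp only [bas_last_apply_castSucc, add_zero, res_add, res_bas] at h0
  simp only [hc5, del, zero_add]
  linear_combination h0

/-! ### The tuple space -/

abbrev TT : Type := Fin 6 × Fin 6 × Fin 6 × Fin 6 × Fin 6 × Fin 6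

def q1 (x : TT) : Fin 6 := x.1
def q2 (x : TT) : Fin 6 := x.2.1
def q3 (x : TT) : Fin 6 := x.2.2.1
def q4 (x : TT) : Fin 6 := x.2.2.2.1
def q5 (x : TT) : Fin 6 := x.2.2.2.2.1
def q6 (x : TT) : Fin 6 := x.2.2.2.2.2

def fset (x : TT) : Finset (Fin 6) := {q1 x, q2 x, q3 x, q4 x, q5 x, q6 x}

def trm (Q : Gn 6 → F2sq) (x : TT) : ZMod 2 :=
  (hcoef Q (q1 x) (q2 x)).1 * (hcoef Q (q3 x) (q4 x)).1 * (hcoef Q (q5 x) (q6 x)).2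

def itrm (Q : Gn 6 → F2sq) (x : TT) : ℤ := ((trm Q x).val : ℤ)

abbrev rcond (x : TT) : Prop :=
  q1 x < q2 x ∧ q3 x < q4 x ∧ q5 x < q6 x ∧ q1 x < q3 x ∧ fset x = Finset.univ

def NQ (Q : Gn 6 → F2sq) : ℤ := ∑ x : TT, if rcond x then itrm Q x else 0

lemma NQ_eq_nested (Q : Gn 6 → F2sq) :
    NQ Q = ∑ a : Fin 6, ∑ b : Fin 6, ∑ c : Fin 6, ∑ d : Fin 6, ∑ e : Fin 6, ∑ f : Fin 6,
      if a < b ∧ c < d ∧ e < f ∧ a < c ∧ ({a, b, c, d, e, f} : Finset (Fin 6)) = Finset.univ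
      then (((hcoef Q a b).1 * (hcoef Q c d).1 * (hcoef Q e f).2).val : ℤ)
      else 0 := by
  unfold NQ
  simp only [Fintype.sum_prod_type]
  rfl

lemma rho_eq (Q : Gn 6 → F2sq) : rho Q = (((NQ Q : ℝ) / 2 : ℝ) : 𝕋) := by
  unfold rho
  rw [NQ_eq_nested]

/-! ### Distinctness from the covering condition -/

lemma distinct_of_univ {a b c d e f : Fin 6} (h : ({a,b,c,d,e,f} : Finset (Fin 6)) = Finset.univ) :
    ([a,b,c,d,e,f] : List (Fin 6)).Nodup := by
  rw [← Multiset.coe_nodup, ← Multiset.toFinset_card_eq_card_iff_nodup]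
  have hM : Multiset.toFinset (↑[a,b,c,d,e,f] : Multiset (Fin 6)) = {a,b,c,d,e,f} := by
    simp [Finset.insert_def]
  rw [hM, h]
  simp

lemma ne_of_univ {a b c d e f : Fin 6} (h : ({a,b,c,d,e,f} : Finset (Fin 6)) = Finset.univ) :
    a ≠ b ∧ a ≠ c ∧ a ≠ d ∧ a ≠ e ∧ a ≠ f ∧ b ≠ c ∧ b ≠ d ∧ b ≠ e ∧ b ≠ f ∧
      c ≠ d ∧ c ≠ e ∧ c ≠ f ∧ d ≠ e ∧ d ≠ f ∧ e ≠ f := by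
  have hn := distinct_of_univ h
  simp only [List.nodup_cons, List.mem_cons, List.mem_singleton, List.not_mem_nil,
    List.nodup_nil, not_or, or_false, and_true] at hn
  tauto

lemma last_mem_of_univ {a b c d e f : Fin 6}
    (h : ({a,b,c,d,e,f} : Finset (Fin 6)) = Finset.univ) :
    Fin.last 5 = a ∨ Fin.last 5 = b ∨ Fin.last 5 = c ∨ Fin.last 5 = d ∨ Fin.last 5 = e ∨
      Fin.last 5 = f := by
  have : (Fin.last 5 : Fin 6) ∈ ({a,b,c,d,e,f} : Finset (Fin 6)) := by
    rw [h]; exact Finset.mem_univ _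
  simpa using this

/-! ### The halving lemma -/

lemma halve {ι : Type*} [Fintype ι] (t : ι → ℤ) (c : ι → Prop) [DecidablePred c] (sw : ι → ι)
    (hinv : Function.Involutive sw) (p q : ι → Fin 6)
    (hc : ∀ x, c (sw x) ↔ c x) (ht : ∀ x, c x → t (sw x) = t x)
    (hp : ∀ x, p (sw x) = q x) (hq : ∀ x, q (sw x) = p x)
    (hne : ∀ x, c x → p x ≠ q x) :
    ∑ x, (if c x then t x else 0) = 2 * ∑ x, (if c x ∧ p x < q x then t x else 0) := by
  have split : ∀ x : ι, (if c x then t x else 0) =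
      (if c x ∧ p x < q x then t x else 0) + (if c x ∧ q x < p x then t x else 0) := by
    intro x
    by_cases h : c x
    · rcases (hne x h).lt_or_gt with hl | hl
      · simp [h, hl, asymm hl]
      · simp [h, hl, asymm hl]
    · simp [h]
  rw [Finset.sum_congr rfl (fun x _ => split x), Finset.sum_add_distrib]
  have he : ∑ x, (if c x ∧ q x < p x then t x else 0) =
      ∑ x, (if c x ∧ p x < q x then t x else 0) := by
    apply Fintype.sum_equiv (Function.Involutive.toPerm sw hinv)
    intro x
    show (if c x ∧ q x < p x then t x else 0) = (if c (sw x) ∧ p (sw x) < q (sw x) then t (sw x) else 0)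
    by_cases h : c x ∧ q x < p x
    · rw [if_pos h, if_pos (by rw [hc, hp, hq]; exact h), ht x h.1]
    · rw [if_neg h, if_neg (by rw [hc, hp, hq]; exact h)]
  rw [he]; ring

/-! ### The swaps -/

def sw12 (x : TT) : TT := (q2 x, q1 x, q3 x, q4 x, q5 x, q6 x)
def sw34 (x : TT) : TT := (q1 x, q2 x, q4 x, q3 x, q5 x, q6 x)
def sw56 (x : TT) : TT := (q1 x, q2 x, q3 x, q4 x, q6 x, q5 x)
def swblk (x : TT) : TT := (q3 x, q4 x, q1 x, q2 x, q5 x, q6 x)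

lemma sw12_inv : Function.Involutive sw12 := fun x => rfl
lemma sw34_inv : Function.Involutive sw34 := fun x => rfl
lemma sw56_inv : Function.Involutive sw56 := fun x => rfl
lemma swblk_inv : Function.Involutive swblk := fun x => rfl

lemma fset_sw12 (x : TT) : fset (sw12 x) = fset x := by
  ext g; unfold fset sw12 q1 q2 q3 q4 q5 q6; simp; tauto

lemma fset_sw34 (x : TT) : fset (sw34 x) = fset x := by
  ext g; unfold fset sw34 q1 q2 q3 q4 q5 q6; simp; tauto

lemma fset_sw56 (x : TT) : fset (sw56 x) = fset x := by
  ext g; unfold fset sw56 q1 q2 q3 q4 q5 q6; simp; tauto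

lemma fset_swblk (x : TT) : fset (swblk x) = fset x := by
  ext g; unfold fset swblk q1 q2 q3 q4 q5 q6; simp; tauto

lemma itrm_sw12 (Q : Gn 6 → F2sq) (x : TT) : itrm Q (sw12 x) = itrm Q x := by
  unfold itrm trm sw12 q1 q2 q3 q4 q5 q6
  simp only
  rw [hcoef_comm Q x.2.1 x.1]

lemma itrm_sw34 (Q : Gn 6 → F2sq) (x : TT) : itrm Q (sw34 x) = itrm Q x := by
  unfold itrm trm sw34 q1 q2 q3 q4 q5 q6
  simp only
  rw [hcoef_comm Q x.2.2.2.1 x.2.2.1]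

lemma itrm_sw56 (Q : Gn 6 → F2sq) (x : TT) : itrm Q (sw56 x) = itrm Q x := by
  unfold itrm trm sw56 q1 q2 q3 q4 q5 q6
  simp only
  rw [hcoef_comm Q x.2.2.2.2.2 x.2.2.2.2.1]

lemma itrm_swblk (Q : Gn 6 → F2sq) (x : TT) : itrm Q (swblk x) = itrm Q x := by
  unfold itrm trm swblk q1 q2 q3 q4 q5 q6
  simp only
  rw [mul_comm ((hcoef Q x.2.2.1 x.2.2.2.1).1) ((hcoef Q x.1 x.2.1).1)]

/-! ### The chain: full sum equals 16 times the canonical sum -/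

lemma chain (Q : Gn 6 → F2sq) :
    (∑ x : TT, if fset x = Finset.univ then itrm Q x else 0) = 16 * NQ Q := by
  have h1 : (∑ x : TT, if fset x = Finset.univ then itrm Q x else 0)
      = 2 * ∑ x : TT, if (fset x = Finset.univ) ∧ q1 x < q2 x then itrm Q x else 0 :=
    halve (itrm Q) (fun x => fset x = Finset.univ) sw12 sw12_inv q1 q2
      (fun x => by
        show fset (sw12 x) = Finset.univ ↔ fset x = Finset.univ
        rw [fset_sw12]) (fun x _ => itrm_sw12 Q x) (fun x => rfl) (fun x => rfl)
      (fun x h => (ne_of_univ h).1)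
  have h2 : (∑ x : TT, if (fset x = Finset.univ) ∧ q1 x < q2 x then itrm Q x else 0)
      = 2 * ∑ x : TT, if ((fset x = Finset.univ) ∧ q1 x < q2 x) ∧ q3 x < q4 x
          then itrm Q x else 0 :=
    halve (itrm Q) (fun x => (fset x = Finset.univ) ∧ q1 x < q2 x) sw34 sw34_inv q3 q4
      (fun x => by
        show (fset (sw34 x) = Finset.univ ∧ q1 x < q2 x) ↔ (fset x = Finset.univ ∧ q1 x < q2 x)
        rw [fset_sw34]) (fun x _ => itrm_sw34 Q x)
      (fun x => rfl) (fun x => rfl)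
      (fun x h => (ne_of_univ h.1).2.2.2.2.2.2.2.2.2.1)
  have h3 : (∑ x : TT, if ((fset x = Finset.univ) ∧ q1 x < q2 x) ∧ q3 x < q4 x
        then itrm Q x else 0)
      = 2 * ∑ x : TT, if (((fset x = Finset.univ) ∧ q1 x < q2 x) ∧ q3 x < q4 x) ∧ q5 x < q6 x
          then itrm Q x else 0 :=
    halve (itrm Q) (fun x => ((fset x = Finset.univ) ∧ q1 x < q2 x) ∧ q3 x < q4 x)
      sw56 sw56_inv q5 q6
      (fun x => by
        show ((fset (sw56 x) = Finset.univ ∧ q1 x < q2 x) ∧ q3 x < q4 x) ↔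
          ((fset x = Finset.univ ∧ q1 x < q2 x) ∧ q3 x < q4 x)
        rw [fset_sw56]) (fun x _ => itrm_sw56 Q x)
      (fun x => rfl) (fun x => rfl)
      (fun x h => (ne_of_univ h.1.1).2.2.2.2.2.2.2.2.2.2.2.2.2.2)
  have h4 : (∑ x : TT, if (((fset x = Finset.univ) ∧ q1 x < q2 x) ∧ q3 x < q4 x) ∧ q5 x < q6 x
        then itrm Q x else 0)
      = 2 * ∑ x : TT, if ((((fset x = Finset.univ) ∧ q1 x < q2 x) ∧ q3 x < q4 x) ∧ q5 x < q6 x)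
          ∧ q1 x < q3 x then itrm Q x else 0 :=
    halve (itrm Q)
      (fun x => (((fset x = Finset.univ) ∧ q1 x < q2 x) ∧ q3 x < q4 x) ∧ q5 x < q6 x)
      swblk swblk_inv q1 q3
      (fun x => by
        show (((fset (swblk x) = Finset.univ ∧ q3 x < q4 x) ∧ q1 x < q2 x) ∧ q5 x < q6 x) ↔
          (((fset x = Finset.univ ∧ q1 x < q2 x) ∧ q3 x < q4 x) ∧ q5 x < q6 x)
        rw [fset_swblk]
        constructor
        · rintro ⟨⟨⟨hu, h34⟩, h12⟩, h56⟩; exact ⟨⟨⟨hu, h12⟩, h34⟩, h56⟩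
        · rintro ⟨⟨⟨hu, h12⟩, h34⟩, h56⟩; exact ⟨⟨⟨hu, h34⟩, h12⟩, h56⟩) (fun x _ => itrm_swblk Q x)
      (fun x => rfl) (fun x => rfl)
      (fun x h => (ne_of_univ h.1.1.1).2.1)
  have h5 : (∑ x : TT, if ((((fset x = Finset.univ) ∧ q1 x < q2 x) ∧ q3 x < q4 x) ∧ q5 x < q6 x)
        ∧ q1 x < q3 x then itrm Q x else 0) = NQ Q := by
    unfold NQ
    apply Finset.sum_congr rfl
    intro x _
    apply if_congr _ rfl rfl
    constructor
    · rintro ⟨⟨⟨⟨hu, h12⟩, h34⟩, h56⟩, h13⟩; exact ⟨h12, h34, h56, h13, hu⟩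
    · rintro ⟨h12, h34, h56, h13, hu⟩; exact ⟨⟨⟨⟨hu, h12⟩, h34⟩, h56⟩, h13⟩
  rw [h1, h2, h3, h4, h5]
  ring

/-! ### Permutation invariance -/

lemma hcoef_comp (Q : Gn 6 → F2sq) (σ : Equiv.Perm (Fin 6)) (i j : Fin 6) :
    hcoef (fun ω => Q (ω ∘ σ)) (σ i) (σ j) = hcoef Q i j := by
  have hb : ∀ k : Fin 6, ((bas (σ k) : Gn 6) ∘ σ) = bas k := by
    intro k; funext t
    simp [bas, Function.comp, EmbeddingLike.apply_eq_iff_eq]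
  have hadd : ∀ v w : Gn 6, ((v + w) ∘ σ) = v ∘ σ + w ∘ σ := fun _ _ => rfl
  have h0 : ((0 : Gn 6) ∘ σ) = 0 := rfl
  simp only [hcoef, del, zero_add, hadd, hb, h0]

def permT (σ : Equiv.Perm (Fin 6)) : TT ≃ TT :=
  σ.prodCongr (σ.prodCongr (σ.prodCongr (σ.prodCongr (σ.prodCongr σ))))

lemma univ_map (σ : Equiv.Perm (Fin 6)) (a b c d e f : Fin 6) :
    (({σ a, σ b, σ c, σ d, σ e, σ f} : Finset (Fin 6)) = Finset.univ) ↔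
      (({a, b, c, d, e, f} : Finset (Fin 6)) = Finset.univ) := by
  simp only [Finset.eq_univ_iff_forall, Finset.mem_insert, Finset.mem_singleton]
  constructor
  · intro h x
    have := h (σ x)
    simpa [EmbeddingLike.apply_eq_iff_eq] using this
  · intro h x
    have := h (σ.symm x)
    simp only [Equiv.symm_apply_eq] at this
    simpa using this

lemma Nfull_perm (Q : Gn 6 → F2sq) (σ : Equiv.Perm (Fin 6)) :
    (∑ x : TT, if fset x = Finset.univ then itrm Q x else 0)
      = ∑ x : TT, if fset x = Finset.univ then itrm (fun ω => Q (ω ∘ σ)) x else 0 := by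
  apply Fintype.sum_equiv (permT σ)
  intro x
  obtain ⟨a, b, c, d, e, f⟩ := x
  show (if ({a,b,c,d,e,f} : Finset (Fin 6)) = Finset.univ then itrm Q (a,b,c,d,e,f) else 0)
    = (if ({σ a, σ b, σ c, σ d, σ e, σ f} : Finset (Fin 6)) = Finset.univ
        then itrm (fun ω => Q (ω ∘ σ)) (σ a, σ b, σ c, σ d, σ e, σ f) else 0)
  have ht : itrm (fun ω => Q (ω ∘ σ)) (σ a, σ b, σ c, σ d, σ e, σ f) = itrm Q (a,b,c,d,e,f) := by
    unfold itrm trm q1 q2 q3 q4 q5 q6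
    simp only [hcoef_comp]
  rw [ht]
  exact (if_congr (univ_map σ a b c d e f) rfl rfl).symm

lemma NQ_perm (Q : Gn 6 → F2sq) (σ : Equiv.Perm (Fin 6)) :
    NQ (fun ω => Q (ω ∘ σ)) = NQ Q := by
  have h := Nfull_perm Q σ
  rw [chain, chain] at h
  omega

/-! ### Mod 2 arithmetic on the circle -/

lemma coeT_add (r s : ℝ) : ((r + s : ℝ) : 𝕋) = (r : 𝕋) + (s : 𝕋) := rfl

lemma half_congr {m n : ℤ} (h : (m : ZMod 2) = (n : ZMod 2)) :
    (((m : ℝ)/2 : ℝ) : 𝕋) = (((n : ℝ)/2 : ℝ) : 𝕋) := by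
  have h2 : (2:ℤ) ∣ m - n := by
    have := (ZMod.intCast_eq_intCast_iff m n 2).mp h
    exact (Int.ModEq.dvd this.symm)
  obtain ⟨k, hk⟩ := h2
  have hr : (m:ℝ)/2 = (n:ℝ)/2 + (k : ℝ) := by
    have := congrArg (fun z : ℤ => (z : ℝ)) hk
    push_cast at this
    linarith
  rw [hr, coeT_add]
  have hz : (((k : ℝ)) : 𝕋) = 0 := by
    rw [AddCircle.coe_eq_zero_iff]
    exact ⟨k, by simp⟩
  rw [hz, add_zero]

lemma NQ_mod (Q : Gn 6 → F2sq) :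
    ((NQ Q : ℤ) : ZMod 2) = ∑ x : TT, if rcond x then trm Q x else 0 := by
  unfold NQ
  push_cast
  apply Finset.sum_congr rfl
  intro x _
  by_cases h : rcond x
  · rw [if_pos h, if_pos h]
    unfold itrm
    push_cast [ZMod.natCast_val, ZMod.cast_id]
    rfl
  · rw [if_neg h, if_neg h]

/-! ### The key term identity for concatenations -/

lemma key_term (x y z : Gn 5 → F2sq) (hxy : ∀ i j, hc5 y i j = hc5 x i j)
    (a b c d e f : Fin 6) (hab : a < b) (hcd : c < d) (hef : e < f)
    (hU : ({a,b,c,d,e,f} : Finset (Fin 6)) = Finset.univ) :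
    (hcoef (concat6 x z) a b).1 * (hcoef (concat6 x z) c d).1 * (hcoef (concat6 x z) e f).2
      = (hcoef (concat6 x y) a b).1 * (hcoef (concat6 x y) c d).1 * (hcoef (concat6 x y) e f).2
        + (hcoef (concat6 y z) a b).1 * (hcoef (concat6 y z) c d).1 *
            (hcoef (concat6 y z) e f).2 := by
  obtain ⟨hne1, hne2, hne3, hne4, hne5, hne6, hne7, hne8, hne9, hne10, hne11, hne12,
    hne13, hne14, hne15⟩ := ne_of_univ hU
  have ha : a ≠ Fin.last 5 := (lt_of_lt_of_le hab (Fin.le_last b)).ne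
  have hc : c ≠ Fin.last 5 := (lt_of_lt_of_le hcd (Fin.le_last d)).ne
  have he : e ≠ Fin.last 5 := (lt_of_lt_of_le hef (Fin.le_last f)).ne
  rcases last_mem_of_univ hU with hl | hl | hl | hl | hl | hl
  · exact absurd hl.symm ha
  · -- b = last
    subst hl
    have hd : d ≠ Fin.last 5 := Ne.symm hne7
    have hf : f ≠ Fin.last 5 := Ne.symm hne9
    obtain ⟨a', rfl⟩ := Fin.exists_castSucc_eq.mpr ha
    obtain ⟨c', rfl⟩ := Fin.exists_castSucc_eq.mpr hc
    obtain ⟨d', rfl⟩ := Fin.exists_castSucc_eq.mpr hd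
    obtain ⟨e', rfl⟩ := Fin.exists_castSucc_eq.mpr he
    obtain ⟨f', rfl⟩ := Fin.exists_castSucc_eq.mpr hf
    rw [hcoef_concat_last, hcoef_concat_last, hcoef_concat_last, hcoef_concat_left,
      hcoef_concat_left, hcoef_concat_left, hcoef_concat_left, hcoef_concat_left,
      hcoef_concat_left, hxy, hxy]
    simp only [Prod.fst_sub, Prod.snd_sub]
    ring
  · exact absurd hl.symm hc
  · -- d = last
    subst hl
    have hb : b ≠ Fin.last 5 := hne7
    have hf : f ≠ Fin.last 5 := Ne.symm hne14
    obtain ⟨a', rfl⟩ := Fin.exists_castSucc_eq.mpr ha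
    obtain ⟨b', rfl⟩ := Fin.exists_castSucc_eq.mpr hb
    obtain ⟨c', rfl⟩ := Fin.exists_castSucc_eq.mpr hc
    obtain ⟨e', rfl⟩ := Fin.exists_castSucc_eq.mpr he
    obtain ⟨f', rfl⟩ := Fin.exists_castSucc_eq.mpr hf
    rw [hcoef_concat_last, hcoef_concat_last, hcoef_concat_last, hcoef_concat_left,
      hcoef_concat_left, hcoef_concat_left, hcoef_concat_left, hcoef_concat_left,
      hcoef_concat_left, hxy, hxy]
    simp only [Prod.fst_sub, Prod.snd_sub]
    ring
  · exact absurd hl.symm he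
  · -- f = last
    subst hl
    have hb : b ≠ Fin.last 5 := hne9
    have hd : d ≠ Fin.last 5 := hne14
    obtain ⟨a', rfl⟩ := Fin.exists_castSucc_eq.mpr ha
    obtain ⟨b', rfl⟩ := Fin.exists_castSucc_eq.mpr hb
    obtain ⟨c', rfl⟩ := Fin.exists_castSucc_eq.mpr hc
    obtain ⟨d', rfl⟩ := Fin.exists_castSucc_eq.mpr hd
    obtain ⟨e', rfl⟩ := Fin.exists_castSucc_eq.mpr he
    rw [hcoef_concat_last, hcoef_concat_last, hcoef_concat_last, hcoef_concat_left,
      hcoef_concat_left, hcoef_concat_left, hcoef_concat_left, hcoef_concat_left,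
      hcoef_concat_left, hxy, hxy]
    simp only [Prod.fst_sub, Prod.snd_sub]
    ring

lemma NQ_concat_mod (x y z : Gn 5 → F2sq) (hxy : ∀ i j, hc5 y i j = hc5 x i j) :
    ((NQ (concat6 x z) : ℤ) : ZMod 2)
      = ((NQ (concat6 x y) : ℤ) : ZMod 2) + ((NQ (concat6 y z) : ℤ) : ZMod 2) := by
  rw [NQ_mod, NQ_mod, NQ_mod, ← Finset.sum_add_distrib]
  apply Finset.sum_congr rfl
  intro w _
  by_cases h : rcond w
  · rw [if_pos h, if_pos h, if_pos h]
    obtain ⟨h12, h34, h56, _, hU⟩ := h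
    exact key_term x y z hxy (q1 w) (q2 w) (q3 w) (q4 w) (q5 w) (q6 w) h12 h34 h56 hU
  · rw [if_neg h, if_neg h, if_neg h]
    norm_num

end Aux

/-- the explicit map `ρ : C⁶(X₂) → (½ℤ)/ℤ` is a `5`-cocycle on `X₂`:
it is invariant under permutations of the six coordinates, and satisfies the cocycle
identity with respect to concatenations of `5`-cubes. -/
theorem rho_is_five_cocycle :
    (∀ (Q : Gn 6 → F2sq), IsCubeX2 Q → ∀ σ : Equiv.Perm (Fin 6),
      rho (fun ω => Q (ω ∘ σ)) = rho Q) ∧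
    (∀ x y z : Gn 5 → F2sq, IsCubeX2 x → IsCubeX2 y → IsCubeX2 z →
      IsCubeX2 (concat6 x y) → IsCubeX2 (concat6 y z) →
      rho (concat6 x z) = rho (concat6 x y) + rho (concat6 y z)) := by
  constructor
  · intro Q _ σ
    rw [rho_eq, rho_eq, NQ_perm]
  · intro x y z _ _ _ hxy hyz
    have hrel : ∀ i j, hc5 y i j = hc5 x i j := cube_rel hxy
    rw [rho_eq, rho_eq, rho_eq]
    have hsum : (((NQ (concat6 x y) : ℝ) / 2 : ℝ) : 𝕋) + (((NQ (concat6 y z) : ℝ) / 2 : ℝ) : 𝕋)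
        = ((((NQ (concat6 x y) + NQ (concat6 y z) : ℤ) : ℝ) / 2 : ℝ) : 𝕋) := by
      rw [← coeT_add]
      push_cast
      ring_nf
    rw [hsum]
    apply half_congr
    push_cast
    exact NQ_concat_mod x y z hrel
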